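/- Let R be a commutative ring and b ∈ R. The 3×3 matrix B with rows (1, 1, −1), (0, b, 0), (0, 0, b) is partition regular over R if and only if the annihilator ann(b) = {x ∈ R : xb = 0} is infinite. -/

import Mathlib

open BigOperators

/-- A matrix `A` over `S` is partition regular over the `S`-module `M` for `r` colours if
every colouring of `M` with `r` colours admits a nonzero monochromatic solution of `A m = 0`. -/
def IsPR {S : Type*} [CommRing S] {k l : ℕ} (A : Matrix (Fin k) (Fin l) S)
    (M : Type*) [AddCommGroup M] [Module S M] (r : ℕ) : Prop :=
  ∀ χ : M → Fin r, ∃ m : Fin l → M, m ≠ 0 ∧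
    (∀ i, ∑ j, A i j • m j = 0) ∧ ∀ j j', χ (m j) = χ (m j')

/-- Partition regularity for every (positive) finite number of colours. -/
def IsPRAll {S : Type*} [CommRing S] {k l : ℕ} (A : Matrix (Fin k) (Fin l) S)
    (M : Type*) [AddCommGroup M] [Module S M] : Prop :=
  ∀ r : ℕ, 1 ≤ r → IsPR A M r

section Aux

variable {R : Type*} [CommRing R]

/-- The set of values forbidden for the next element: negatives of all subset sums of
previous values. -/
def badSet (g : ℕ → R) (n : ℕ) : Set R :=
  (fun t => - ∑ i ∈ t, g i) '' ↑(Finset.range n).powerset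

lemma badSet_finite (g : ℕ → R) (n : ℕ) : (badSet g n).Finite :=
  ((Finset.range n).powerset.finite_toSet.image _)

noncomputable def pick (A : Set R) (hA : A.Infinite) (g : ℕ → R) (n : ℕ) : R :=
  (hA.diff (badSet_finite g n)).nonempty.choose

lemma pick_spec (A : Set R) (hA : A.Infinite) (g : ℕ → R) (n : ℕ) :
    pick A hA g n ∈ A \ badSet g n :=
  (hA.diff (badSet_finite g n)).nonempty.choose_spec

noncomputable def pre (A : Set R) (hA : A.Infinite) : ℕ → (ℕ → R)
  | 0 => 0
  | n + 1 => Function.update (pre A hA n) n (pick A hA (pre A hA n) n)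

noncomputable def seq (A : Set R) (hA : A.Infinite) (n : ℕ) : R := pre A hA (n + 1) n

lemma pre_eq (A : Set R) (hA : A.Infinite) :
    ∀ m n, n < m → pre A hA m n = seq A hA n := by
  intro m
  induction m with
  | zero => intro n hn; omega
  | succ m ih =>
    intro n hn
    rcases eq_or_lt_of_le (Nat.lt_succ_iff.mp hn) with h | h
    · subst h
      rfl
    · show Function.update (pre A hA m) m _ n = _
      rw [Function.update_of_ne (by omega), ih n h]

lemma seq_spec (A : Set R) (hA : A.Infinite) (n : ℕ) :
    seq A hA n ∈ A \ badSet (pre A hA n) n := by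
  have : seq A hA n = pick A hA (pre A hA n) n := by
    show Function.update (pre A hA n) n _ n = _
    rw [Function.update_self]
  rw [this]
  exact pick_spec A hA _ n

lemma seq_mem (A : Set R) (hA : A.Infinite) (n : ℕ) : seq A hA n ∈ A :=
  (seq_spec A hA n).1

lemma seq_sum_ne_zero (A : Set R) (hA : A.Infinite) (s : Finset ℕ) (hs : s.Nonempty) :
    ∑ i ∈ s, seq A hA i ≠ 0 := by
  set k := s.max' hs with hk
  have hks : k ∈ s := s.max'_mem hs
  have hsub : s.erase k ⊆ Finset.range k := by
    intro i hi
    rw [Finset.mem_range]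
    exact lt_of_le_of_ne (s.le_max' i (Finset.mem_of_mem_erase hi))
      (Finset.ne_of_mem_erase hi)
  have hsum : ∑ i ∈ s, seq A hA i = seq A hA k + ∑ i ∈ s.erase k, seq A hA i := by
    rw [← Finset.add_sum_erase _ _ hks]
  rw [hsum]
  intro h0
  have hbad : seq A hA k ∈ badSet (pre A hA k) k := by
    refine ⟨s.erase k, Finset.mem_coe.mpr (Finset.mem_powerset.mpr hsub), ?_⟩
    show - ∑ i ∈ s.erase k, pre A hA k i = seq A hA k
    have heq : ∑ i ∈ s.erase k, pre A hA k i = ∑ i ∈ s.erase k, seq A hA i :=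
      Finset.sum_congr rfl fun i hi => pre_eq A hA k i (Finset.mem_range.mp (hsub hi))
    rw [heq]
    linear_combination -h0
  exact (seq_spec A hA k).2 hbad

lemma FS_eq_sum {M : Type*} [AddCommMonoid M] {a : Stream' M} {m : M}
    (hm : m ∈ Hindman.FS a) :
    ∃ s : Finset ℕ, s.Nonempty ∧ m = ∑ i ∈ s, a.get i := by
  induction hm with
  | head' a => exact ⟨{0}, ⟨0, by simp⟩, by simp [Stream'.head]⟩
  | tail' a m h ih =>
    obtain ⟨s, hs, hsum⟩ := ih
    refine ⟨s.image (· + 1), hs.image _, ?_⟩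
    rw [Finset.sum_image (by intro x _ y _ h; simpa using h)]
    exact hsum
  | cons' a m h ih =>
    obtain ⟨s, hs, hsum⟩ := ih
    refine ⟨insert 0 (s.image (· + 1)), ⟨0, by simp⟩, ?_⟩
    rw [Finset.sum_insert (by simp), Finset.sum_image (by intro x _ y _ h; simpa using h)]
    rw [hsum]
    rfl

end Aux

theorem pr_matrixB_iff_ann_infinite {R : Type*} [CommRing R] (b : R) :
    IsPRAll (!![(1 : R), 1, -1; 0, b, 0; 0, 0, b]) R ↔
      {x : R | x * b = 0}.Infinite := by
  set A : Set R := {x : R | x * b = 0} with hA_def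
  constructor
  · intro h
    classical
    by_contra hfin
    rw [Set.not_infinite] at hfin
    have h0A : (0 : R) ∈ A := by simp [hA_def]
    have h0A' : (0 : R) ∈ hfin.toFinset := hfin.mem_toFinset.mpr h0A
    set n := hfin.toFinset.card with hn
    have hn1 : 1 ≤ n := Finset.card_pos.mpr ⟨0, h0A'⟩
    let e : hfin.toFinset ≃ Fin n := hfin.toFinset.equivFin
    let χ : R → Fin n := fun x =>
      if hx : x ∈ hfin.toFinset then e ⟨x, hx⟩ else e ⟨0, h0A'⟩
    obtain ⟨m, hm0, hmeq, hmono⟩ := h n hn1 χ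
    have e0 : m 0 + m 1 - m 2 = 0 := by
      have := hmeq 0
      simpa [Fin.sum_univ_three, sub_eq_add_neg] using this
    have e1 : b * m 1 = 0 := by
      have := hmeq 1
      simpa [Fin.sum_univ_three] using this
    have e2 : b * m 2 = 0 := by
      have := hmeq 2
      simpa [Fin.sum_univ_three] using this
    have hmem : ∀ j : Fin 3, m j ∈ hfin.toFinset := by
      intro j
      rw [hfin.mem_toFinset]
      fin_cases j
      · show m 0 * b = 0
        have : m 0 = m 2 - m 1 := by linear_combination e0
        rw [this]
        linear_combination e2 - e1
      · show m 1 * b = 0; linear_combination e1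
      · show m 2 * b = 0; linear_combination e2
    have hχ : ∀ j : Fin 3, χ (m j) = e ⟨m j, hmem j⟩ := fun j => by simp only [χ]; exact dif_pos (hmem j)
    have heqm : ∀ j j' : Fin 3, m j = m j' := by
      intro j j'
      have := hmono j j'
      rw [hχ j, hχ j'] at this
      have := e.injective this
      exact congrArg Subtype.val this
    have h10 : m 1 = 0 := by
      have h02 : m 0 = m 2 := heqm 0 2
      linear_combination e0 - h02
    have h00 : m 0 = 0 := (heqm 0 1).trans h10
    have h20 : m 2 = 0 := (heqm 2 1).trans h10
    apply hm0
    funext j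
    fin_cases j <;> assumption
  · intro hA r hr χ
    let a : Stream' R := seq A hA
    have hFSA : ∀ w ∈ Hindman.FS a, w ∈ A ∧ w ≠ 0 := by
      intro w hw
      obtain ⟨s, hs, hsum⟩ := FS_eq_sum hw
      constructor
      · show w * b = 0
        rw [hsum, Finset.sum_mul]
        exact Finset.sum_eq_zero fun i _ => seq_mem A hA i
      · rw [hsum]; exact seq_sum_ne_zero A hA s hs
    let cover : Set (Set R) := (fun i : Fin r => Hindman.FS a ∩ χ ⁻¹' {i}) '' Set.univ
    have hfin : cover.Finite := Set.finite_univ.image _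
    have hcov : Hindman.FS a ⊆ ⋃₀ cover := fun x hx =>
      ⟨_, ⟨χ x, trivial, rfl⟩, hx, rfl⟩
    obtain ⟨c, ⟨i, -, rfl⟩, bS, hb⟩ := Hindman.FS_partition_regular a cover hfin hcov
    have hx : bS.head ∈ Hindman.FS bS := Hindman.FS.head bS
    have hy : bS.tail.head ∈ Hindman.FS bS := Hindman.FS.tail _ _ (Hindman.FS.head _)
    have hz : bS.head + bS.tail.head ∈ Hindman.FS bS :=
      Hindman.FS.cons _ _ (Hindman.FS.head _)
    set x := bS.head with hxdef
    set y := bS.tail.head with hydef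
    have hxA := hFSA _ (hb hx).1
    have hyA := hFSA _ (hb hy).1
    have hzA := hFSA _ (hb hz).1
    refine ⟨![x, y, x + y], ?_, ?_, ?_⟩
    · intro hc
      exact hxA.2 (by simpa using congrFun hc 0)
    · intro i2
      fin_cases i2
      · show (1:R) • _ + _ = 0
        simp [Fin.sum_univ_three]
      · show ∑ j, _ • _ = 0
        have : y * b = 0 := hyA.1
        simp [Fin.sum_univ_three, smul_eq_mul]
        linear_combination this
      · show ∑ j, _ • _ = 0
        have : (x + y) * b = 0 := hzA.1
        simp [Fin.sum_univ_three, smul_eq_mul]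
        linear_combination this
    · have hcol : ∀ w ∈ Hindman.FS bS, χ w = i := fun w hw => (hb hw).2
      have hall : ∀ j : Fin 3, χ (![x, y, x + y] j) = i := by
        intro j
        fin_cases j
        · exact hcol _ hx
        · exact hcol _ hy
        · exact hcol _ hz
      intro j j'
      rw [hall j, hall j']
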